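/- For all nonnegative real numbers a, b, c, d: √((ab + cd)·(ad + cb)) ≤ (√(ab) + √(cd))·(√(ad) + √(cb)) − 2·√(abcd), with equality whenever a = c, or b = d, or abcd = 0. -/
import Mathlib


open Real

/-- √((ab+cd)(ad+cb)) ≤ (√(ab)+√(cd))(√(ad)+√(cb)) − 2√(abcd),
with equality whenever a = c, or b = d, or abcd = 0. -/
theorem sqrt_ineq (a b c d : ℝ) (ha : 0 ≤ a) (hb : 0 ≤ b) (hc : 0 ≤ c)
    (hd : 0 ≤ d) :
    Real.sqrt ((a * b + c * d) * (a * d + c * b)) ≤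
      (Real.sqrt (a * b) + Real.sqrt (c * d)) *
        (Real.sqrt (a * d) + Real.sqrt (c * b)) -
      2 * Real.sqrt (a * b * c * d) ∧
    ((a = c ∨ b = d ∨ a * b * c * d = 0) →
      Real.sqrt ((a * b + c * d) * (a * d + c * b)) =
        (Real.sqrt (a * b) + Real.sqrt (c * d)) *
          (Real.sqrt (a * d) + Real.sqrt (c * b)) -
        2 * Real.sqrt (a * b * c * d)) := by
  obtain ⟨p, hp, rfl⟩ : ∃ p, 0 ≤ p ∧ a = p ^ 2 :=
    ⟨Real.sqrt a, Real.sqrt_nonneg a, (Real.sq_sqrt ha).symm⟩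
  obtain ⟨q, hq, rfl⟩ : ∃ q, 0 ≤ q ∧ b = q ^ 2 :=
    ⟨Real.sqrt b, Real.sqrt_nonneg b, (Real.sq_sqrt hb).symm⟩
  obtain ⟨r, hr, rfl⟩ : ∃ r, 0 ≤ r ∧ c = r ^ 2 :=
    ⟨Real.sqrt c, Real.sqrt_nonneg c, (Real.sq_sqrt hc).symm⟩
  obtain ⟨s, hs, rfl⟩ : ∃ t, 0 ≤ t ∧ d = t ^ 2 :=
    ⟨Real.sqrt d, Real.sqrt_nonneg d, (Real.sq_sqrt hd).symm⟩
  have e1 : Real.sqrt (p ^ 2 * q ^ 2) = p * q := by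
    rw [← mul_pow, Real.sqrt_sq (by positivity)]
  have e2 : Real.sqrt (r ^ 2 * s ^ 2) = r * s := by
    rw [← mul_pow, Real.sqrt_sq (by positivity)]
  have e3 : Real.sqrt (p ^ 2 * s ^ 2) = p * s := by
    rw [← mul_pow, Real.sqrt_sq (by positivity)]
  have e4 : Real.sqrt (r ^ 2 * q ^ 2) = r * q := by
    rw [← mul_pow, Real.sqrt_sq (by positivity)]
  have e5 : Real.sqrt (p ^ 2 * q ^ 2 * r ^ 2 * s ^ 2) = p * q * r * s := by
    rw [show p ^ 2 * q ^ 2 * r ^ 2 * s ^ 2 = (p * q * r * s) ^ 2 by ring,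
      Real.sqrt_sq (by positivity)]
  rw [e1, e2, e3, e4, e5]
  set R : ℝ := (p * q + r * s) * (p * s + r * q) - 2 * (p * q * r * s) with hR
  have hRnn : 0 ≤ R := by
    nlinarith [mul_nonneg (mul_nonneg hq hs) (sq_nonneg (p - r)),
      mul_nonneg (mul_nonneg hp hr) (sq_nonneg (q - s)),
      mul_nonneg (mul_nonneg (mul_nonneg hp hq) hr) hs]
  have key : R ^ 2 - (p ^ 2 * q ^ 2 + r ^ 2 * s ^ 2) * (p ^ 2 * s ^ 2 + r ^ 2 * q ^ 2)
      = 2 * (p * q * r * s) * (p - r) ^ 2 * (q - s) ^ 2 := by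
    rw [hR]; ring
  constructor
  · have hX : (p ^ 2 * q ^ 2 + r ^ 2 * s ^ 2) * (p ^ 2 * s ^ 2 + r ^ 2 * q ^ 2) ≤ R ^ 2 := by
      nlinarith [mul_nonneg (mul_nonneg (mul_nonneg
        (mul_nonneg (mul_nonneg (mul_nonneg hp hq) hr) hs) (sq_nonneg (p - r)))
        (sq_nonneg (q - s))) (by norm_num : (0:ℝ) ≤ 2)]
    calc Real.sqrt ((p ^ 2 * q ^ 2 + r ^ 2 * s ^ 2) * (p ^ 2 * s ^ 2 + r ^ 2 * q ^ 2))
        ≤ Real.sqrt (R ^ 2) := Real.sqrt_le_sqrt hX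
      _ = R := Real.sqrt_sq hRnn
  · intro h
    have hz : 2 * (p * q * r * s) * (p - r) ^ 2 * (q - s) ^ 2 = 0 := by
      rcases h with h | h | h
      · have : p = r := by
          have := congrArg Real.sqrt h
          rwa [Real.sqrt_sq hp, Real.sqrt_sq hr] at this
        rw [this]; ring
      · have : q = s := by
          have := congrArg Real.sqrt h
          rwa [Real.sqrt_sq hq, Real.sqrt_sq hs] at this
        rw [this]; ring
      · have h2 : (p * q * r * s) ^ 2 = 0 := by linear_combination h
        have : p * q * r * s = 0 := by
          exact pow_eq_zero_iff (two_ne_zero) |>.mp h2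
        rw [this]; ring
    have hEq : (p ^ 2 * q ^ 2 + r ^ 2 * s ^ 2) * (p ^ 2 * s ^ 2 + r ^ 2 * q ^ 2) = R ^ 2 := by
      linarith [key, hz]
    rw [hEq, Real.sqrt_sq hRnn]
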